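/- Let ℓ ∈ ℝ^r be a generic length vector with nonnegative components and let k = μ(ℓ). Then every subset of {1,...,r} with fewer than k elements is ℓ-short. -/
import Mathlib


open Finset

/-- `J` is `ℓ`-long if the sum of `ℓ` over `J` exceeds the sum over its complement. -/
def IsLong {r : ℕ} (ℓ : Fin r → ℝ) (J : Finset (Fin r)) : Prop :=
  ∑ j ∈ Jᶜ, ℓ j < ∑ j ∈ J, ℓ j

/-- `ℓ` is generic if no subset sum equals the complementary sum. -/
def IsGeneric {r : ℕ} (ℓ : Fin r → ℝ) : Prop :=
  ∀ J : Finset (Fin r), ∑ j ∈ J, ℓ j ≠ ∑ j ∈ Jᶜ, ℓ j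

open scoped Classical in
/-- `σ_ℓ(J)`: the number of `j ∈ J` such that `J \ {j}` is `ℓ`-short. -/
noncomputable def sigmaL {r : ℕ} (ℓ : Fin r → ℝ) (J : Finset (Fin r)) : ℕ :=
  (J.filter (fun j => ¬ IsLong ℓ (J.erase j))).card

/-- `μ(ℓ) = min { σ_ℓ(J) : J ℓ-long, σ_ℓ(J) > 0 }`. -/
noncomputable def muL {r : ℕ} (ℓ : Fin r → ℝ) : ℕ :=
  sInf {n : ℕ | 0 < n ∧ ∃ J : Finset (Fin r), IsLong ℓ J ∧ sigmaL ℓ J = n}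

theorem short_of_card_lt_mu {r : ℕ} (ℓ : Fin r → ℝ) (hg : IsGeneric ℓ)
    (hpos : ∀ j, 0 ≤ ℓ j) (J : Finset (Fin r)) (hJ : J.card < muL ℓ) :
    ¬ IsLong ℓ J := by
  intro hlong
  classical
  have hne : {n : ℕ | ∃ K, K ⊆ J ∧ IsLong ℓ K ∧ K.card = n}.Nonempty :=
    ⟨J.card, J, le_refl J, hlong, rfl⟩
  obtain ⟨K, hKsub, hKlong, hKcard⟩ := Nat.sInf_mem hne
  have hKmin : ∀ K' : Finset (Fin r), K' ⊆ J → IsLong ℓ K' → K.card ≤ K'.card := by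
    intro K' h1 h2
    rw [hKcard]
    exact Nat.sInf_le ⟨K', h1, h2, rfl⟩
  have hKne : K.Nonempty := by
    rcases K.eq_empty_or_nonempty with h | h
    · exfalso
      subst h
      have h0 : (0:ℝ) ≤ ∑ j ∈ (∅:Finset (Fin r))ᶜ, ℓ j :=
        Finset.sum_nonneg fun j _ => hpos j
      simp only [IsLong, Finset.sum_empty] at hKlong
      linarith
    · exact h
  have hsig : sigmaL ℓ K = K.card := by
    unfold sigmaL
    rw [Finset.filter_true_of_mem]
    intro j hj hlong'
    have h1 : (K.erase j) ⊆ J := (Finset.erase_subset _ _).trans hKsub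
    have h2 := hKmin _ h1 hlong'
    have h3 : (K.erase j).card < K.card := Finset.card_erase_lt_of_mem hj
    omega
  have hmu : muL ℓ ≤ sigmaL ℓ K :=
    Nat.sInf_le ⟨by rw [hsig]; exact Finset.card_pos.mpr hKne, K, hKlong, rfl⟩
  have hcard : K.card ≤ J.card := Finset.card_le_card hKsub
  omega
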